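/- arXiv:2301.10311 — 14 statements merged into one kernel-verified Lean document; each statement's English description precedes it below -/
import Mathlib

section
/- Let x, y, z be binary relations on a type A. If x is univalent, y is a vector, and z is injective, then the array write x[y↦z] = (y ⊓ zᵀ) ⊔ (yᶜ ⊓ x) is univalent. -/
variable {A : Type*}

/-- Relational composition. -/
def rcomp (r s : A → A → Prop) : A → A → Prop := fun a c => ∃ b, r a b ∧ s b c

/-- Relational converse (transposition). -/
def rconv (r : A → A → Prop) : A → A → Prop := fun a b => r b a

/-- The identity relation. -/
def rid : A → A → Prop := fun a b => a = b

/-- Reflexive-transitive closure. -/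
def rstar (r : A → A → Prop) : A → A → Prop := Relation.ReflTransGen r

/-- Transitive closure. -/
def rplus (r : A → A → Prop) : A → A → Prop := Relation.TransGen r

def RUnivalent (r : A → A → Prop) : Prop := rcomp (rconv r) r ≤ rid

def RInjective (r : A → A → Prop) : Prop := rcomp r (rconv r) ≤ rid

def RTotal (r : A → A → Prop) : Prop := rid ≤ rcomp r (rconv r)

def RSurjective (r : A → A → Prop) : Prop := rid ≤ rcomp (rconv r) r

def RMapping (r : A → A → Prop) : Prop := RUnivalent r ∧ RTotal r

def RVector (r : A → A → Prop) : Prop := rcomp r ⊤ = r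

def RPoint (r : A → A → Prop) : Prop := RVector r ∧ RInjective r ∧ RSurjective r

def RAcyclic (r : A → A → Prop) : Prop := rplus r ≤ ridᶜ

def RForest (p : A → A → Prop) : Prop := RMapping p ∧ RAcyclic (p ⊓ ridᶜ)

def RArc (r : A → A → Prop) : Prop := RPoint (rcomp r ⊤) ∧ RPoint (rcomp (rconv r) ⊤)

/-- Array write x[y↦z] = (y ⊓ zᵀ) ⊔ (yᶜ ⊓ x). -/
def rwrite (x y z : A → A → Prop) : A → A → Prop := (y ⊓ rconv z) ⊔ (yᶜ ⊓ x)

/-- Array read x[y] = xᵀ∘y. -/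
def rread (x y : A → A → Prop) : A → A → Prop := rcomp (rconv x) y

/-- Weakly-connected components: wcc(x) = (x ⊔ xᵀ)^*. -/
def wcc (x : A → A → Prop) : A → A → Prop := rstar (x ⊔ rconv x)

/-- Forest components: fc(x) = x^* ∘ (xᵀ)^*. -/
def fc (x : A → A → Prop) : A → A → Prop := rcomp (rstar x) (rstar (rconv x))

/-- The vector of roots of the forest p: roots(p) = (p ⊓ 1)∘⊤. -/
def rroots (p : A → A → Prop) : A → A → Prop := rcomp (p ⊓ rid) ⊤

/-- The root of x in p: root(p,x) = ((pᵀ)^*∘x) ⊓ roots(p). -/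
def rroot (p x : A → A → Prop) : A → A → Prop := rcomp (rstar (rconv p)) x ⊓ rroots p

theorem write_univalent {A : Type*} (x y z : A → A → Prop)
    (hx : RUnivalent x) (hy : RVector y) (hz : RInjective z) :
    RUnivalent (rwrite x y z) := by
  intro a b ⟨c, hca, hcb⟩
  have hyv : ∀ c a b : A, y c a → y c b := by
    intro c a b h
    rw [← hy]; exact ⟨a, h, trivial⟩
  rcases hca with ⟨h1, h2⟩ | ⟨h1, h2⟩ <;> rcases hcb with ⟨h3, h4⟩ | ⟨h3, h4⟩
  · exact hz a b ⟨c, h2, h4⟩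
  · exact absurd (hyv c a b h1) h3
  · exact absurd (hyv c b a h3) h1
  · exact hx a b ⟨c, h2, h4⟩
end

section
/- Let x, y, z be binary relations on a type A. If x is total, y is a vector, and z is surjective, then the array write x[y↦z] = (y ⊓ zᵀ) ⊔ (yᶜ ⊓ x) is total. -/
variable {A : Type*}

theorem write_total {A : Type*} (x y z : A → A → Prop)
    (hx : RTotal x) (hy : RVector y) (hz : RSurjective z) :
    RTotal (rwrite x y z) := by
  intro a b hab
  cases hab
  by_cases hya : ∃ c, y a c
  · obtain ⟨c, hc⟩ := hya
    obtain ⟨d, hd1, hd2⟩ := hz a a rfl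
    refine ⟨d, Or.inl ⟨?_, hd1⟩, Or.inl ⟨?_, hd1⟩⟩
    · rw [← hy]; exact ⟨c, hc, trivial⟩
    · rw [← hy]; exact ⟨c, hc, trivial⟩
  · obtain ⟨d, hd1, hd2⟩ := hx a a rfl
    push_neg at hya
    exact ⟨d, Or.inr ⟨hya d, hd1⟩, Or.inr ⟨hya d, hd2⟩⟩
end

section
/- Let x and y be binary relations on a type A. If x is a mapping and y is a point, then the array read x[y] = xᵀ∘y is a point. -/
variable {A : Type*}

theorem read_point {A : Type*} (x y : A → A → Prop)
    (hx : RMapping x) (hy : RPoint y) :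
    RPoint (rread x y) := by
  obtain ⟨hxu, hxt⟩ := hx
  obtain ⟨hyv, hyi, hys⟩ := hy
  -- y has a "point" p : y p b for all b, unique
  rcases isEmpty_or_nonempty A with hA | hA
  · exact ⟨funext fun a => hA.elim a, fun a => hA.elim a, fun a => hA.elim a⟩
  obtain ⟨b₀⟩ := hA
  obtain ⟨p, hp, -⟩ := hys b₀ b₀ rfl
  have hpall : ∀ b, y p b := by
    intro b
    have := hyv ▸ (rfl : y = y)
    have : rcomp y ⊤ p b := by exact ⟨b₀, hp, trivial⟩
    rwa [hyv] at this
  have huniq : ∀ q b, y q b → q = p := by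
    intro q b hq
    exact hyi q p ⟨b, hq, hpall b⟩
  have hread : ∀ a b, rread x y a b ↔ x p a := by
    intro a b
    constructor
    · rintro ⟨c, hca, hcb⟩
      rwa [huniq c b hcb] at hca
    · intro h
      exact ⟨p, h, hpall b⟩
  refine ⟨?_, ?_, ?_⟩
  · funext a b
    simp only [rcomp, rread] at *
    apply propext
    constructor
    · rintro ⟨c, hc, -⟩
      exact (hread a b).mpr ((hread a c).mp hc)
    · intro h
      exact ⟨b, h, trivial⟩
  · rintro a b ⟨c, hac, hbc⟩
    have h1 : x p a := (hread a c).mp hac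
    have h2 : x p b := (hread b c).mp (hbc : rread x y b c)
    exact hxu a b ⟨p, h1, h2⟩
  · rintro a b rfl
    obtain ⟨c, hc, -⟩ := hxt p p rfl
    exact ⟨c, (hread c a).mpr hc, (hread c a).mpr hc⟩
end

section
/- Let x, y, z be binary relations on a type A with y and z points. Then the array read x[y] = xᵀ∘y equals z if and only if y ⊓ x = y∘zᵀ. -/
variable {A : Type*}

lemma vec_all {A : Type*} {y : A → A → Prop} (hv : RVector y) {a b : A}
    (h : y a b) (c : A) : y a c := by
  rw [← hv]; exact ⟨b, h, trivial⟩

lemma inj_eq {A : Type*} {y : A → A → Prop} (hv : RVector y) (hi : RInjective y)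
    {a c b b' : A} (h1 : y a b) (h2 : y c b') : a = c :=
  hi a c ⟨b, h1, vec_all hv h2 b⟩

lemma surj_ex {A : Type*} {y : A → A → Prop} (hs : RSurjective y) (b : A) :
    ∃ a, y a b := by
  rcases hs b b rfl with ⟨a, ha, _⟩
  exact ⟨a, ha⟩

theorem read_iff {A : Type*} (x y z : A → A → Prop)
    (hy : RPoint y) (hz : RPoint z) :
    rread x y = z ↔ y ⊓ x = rcomp y (rconv z) := by
  obtain ⟨hyv, hyi, hys⟩ := hy
  obtain ⟨hzv, hzi, hzs⟩ := hz
  constructor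
  · intro h
    funext a b
    apply propext
    constructor
    · rintro ⟨hya, hxab⟩
      have hz : z b b := by
        rw [← h]; exact ⟨a, hxab, hya⟩
      exact ⟨b, hya, hz⟩
    · rintro ⟨c, hyac, hzbc⟩
      have : rread x y b c := by rw [h]; exact hzbc
      obtain ⟨m, hxmb, hymc⟩ := this
      have hma : m = a := inj_eq hyv hyi hymc hyac
      exact ⟨vec_all hyv hyac b, hma ▸ hxmb⟩
  · intro h
    funext a b
    apply propext
    constructor
    · rintro ⟨m, hxma, hymb⟩
      have : (y ⊓ x) m a := ⟨vec_all hyv hymb a, hxma⟩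
      rw [h] at this
      obtain ⟨c, _, hzac⟩ := this
      exact vec_all hzv hzac b
    · intro hzab
      obtain ⟨m, hymb⟩ := surj_ex hys b
      have : rcomp y (rconv z) m a := ⟨b, hymb, hzab⟩
      rw [← h] at this
      exact ⟨m, this.2, hymb⟩
end

section
/- Let x, y, z be binary relations on a type A. If y is a surjective vector and z is a vector, then reading the written array at the written index returns the written value: ((y ⊓ zᵀ) ⊔ (yᶜ ⊓ x))ᵀ∘y = z (the put-get lens law). -/
variable {A : Type*}

theorem put_get {A : Type*} (x y z : A → A → Prop)
    (hy1 : RSurjective y) (hy2 : RVector y) (hz : RVector z) :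
    rread (rwrite x y z) y = z := by
  have hyv : ∀ a b c : A, y a b → y a c := fun a b c h => by
    rw [← hy2]; exact ⟨b, h, trivial⟩
  have hzv : ∀ a b c : A, z a b → z a c := fun a b c h => by
    rw [← hz]; exact ⟨b, h, trivial⟩
  funext a c
  simp only [rread, rcomp, rconv, rwrite, eq_iff_iff]
  constructor
  · rintro ⟨b, hb, hbc⟩
    rcases hb with ⟨hyb, hzb⟩ | ⟨hnyb, _⟩
    · exact hzv a b c hzb
    · exact absurd (hyv b c a hbc) hnyb
  · intro hzc
    obtain ⟨b, hb, -⟩ := hy1 a a rfl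
    exact ⟨b, Or.inl ⟨hb, hzv a c b hzc⟩, hyv b a c hb⟩
end

section
/- Let x and y be binary relations on a type A with y a point. Then writing back the value read at index y leaves the array unchanged: x[y↦x[y]] = x, i.e., (y ⊓ (xᵀ∘y)ᵀ) ⊔ (yᶜ ⊓ x) = x (the get-put lens law). -/
variable {A : Type*}

theorem get_put {A : Type*} (x y : A → A → Prop) (hy : RPoint y) :
    rwrite x y (rread x y) = x := by
  obtain ⟨hv, hinj, hsur⟩ := hy
  have hvec : ∀ a b c, y a b → y a c := by
    intro a b c h
    have : rcomp y ⊤ a c := ⟨b, h, trivial⟩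
    rwa [hv] at this
  funext a b
  ext
  simp only [rwrite, rread, rcomp, rconv, Pi.sup_apply, Pi.inf_apply, Pi.compl_apply,
    sup_Prop_eq, inf_Prop_eq, compl_iff_not]
  constructor
  · rintro (⟨hab, c, hxcb, hyca⟩ | ⟨-, hx⟩)
    · have : c = a := hinj c a ⟨b, hvec c a b hyca, hab⟩
      rwa [this] at hxcb
    · exact hx
  · intro hx
    by_cases hab : y a b
    · exact Or.inl ⟨hab, a, hx, hvec a b a hab⟩
    · exact Or.inr ⟨hab, hx⟩
end

section
/- Let x, y, z be binary relations on a type A. If x is injective, y is a point, and z is an injective vector, then the relation obtained by swapping the values of x at indices y and z, namely (x[y↦x[z]])[z↦x[y]], is injective. Here the inner array reads x[z] = xᵀ∘z and x[y] = xᵀ∘y are taken in the original relation x. -/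
variable {A : Type*}

theorem update_injective_swap {A : Type*} (x y z : A → A → Prop)
    (hx : RInjective x) (hy : RPoint y) (hz1 : RInjective z) (hz2 : RVector z) :
    RInjective (rwrite (rwrite x y (rread x z)) z (rread x y)) := by
  obtain ⟨hyv, hyi, _⟩ := hy
  have xinj : ∀ a b c, x a c → x b c → a = b := fun a b c h1 h2 => hx a b ⟨c, h1, h2⟩
  have yvec : ∀ a c c', y a c → y a c' := fun a c c' h =>
    (congrFun (congrFun hyv a) c').mp ⟨c, h, trivial⟩
  have zvec : ∀ a c c', z a c → z a c' := fun a c c' h =>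
    (congrFun (congrFun hz2 a) c').mp ⟨c, h, trivial⟩
  have yinj : ∀ a b c c', y a c → y b c' → a = b := fun a b c c' h1 h2 =>
    hyi a b ⟨c, h1, yvec b c' c h2⟩
  have zinj : ∀ a b c c', z a c → z b c' → a = b := fun a b c c' h1 h2 =>
    hz1 a b ⟨c, h1, zvec b c' c h2⟩
  intro a b ⟨c, hac, hbc⟩
  simp only [rwrite, rread, rcomp, rconv, Pi.inf_apply, Pi.sup_apply, Pi.compl_apply,
    inf_Prop_eq, sup_Prop_eq, compl_iff_not] at hac hbc
  show a = b
  rcases hac with ⟨hza, d, hxd, hyd⟩ | ⟨hnza, ⟨hya, e, hxe, hze⟩ | ⟨hnya, hxa⟩⟩ <;>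
  rcases hbc with ⟨hzb, d', hxd', hyd'⟩ | ⟨hnzb, ⟨hyb, e', hxe', hze'⟩ | ⟨hnyb, hxb⟩⟩
  · exact zinj a b c c hza hzb
  · have h1 : d = e' := xinj d e' c hxd hxe'
    have h2 : d = b := yinj d b a c hyd hyb
    exact (zinj a e' c b hza hze').trans (h1.symm.trans h2)
  · exact absurd (yvec d a c hyd) ((xinj b d c hxb hxd) ▸ hnyb)
  · have h1 : e = d' := xinj e d' c hxe hxd'
    have h2 : a = d' := yinj a d' c b hya hyd'
    exact ((zinj b e c a hzb (h2.trans h1.symm ▸ hze)).trans (h1.trans h2.symm)).symm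
  · exact yinj a b c c hya hyb
  · exact absurd (zvec b a c ((xinj e b c hxe hxb) ▸ hze)) hnzb
  · exact absurd (yvec d' b c hyd') ((xinj a d' c hxa hxd') ▸ hnya)
  · exact absurd (zvec a b c ((xinj e' a c hxe' hxa) ▸ hze')) hnza
  · exact xinj a b c hxa hxb
end

section
/- Let x be a univalent binary relation on a type A. Then the forest-components relation fc(x) = x^*∘(xᵀ)^* is an equivalence: it is reflexive (1 ⊆ fc(x)), transitive (fc(x)∘fc(x) ⊆ fc(x)), and symmetric (fc(x)ᵀ = fc(x)). -/
variable {A : Type*}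

open Relation in
private lemma rstar_conv_iff (x : A → A → Prop) {a b : A} :
    rstar (rconv x) a b ↔ rstar x b a := by
  constructor
  · intro h; induction h with
    | refl => exact ReflTransGen.refl
    | tail h1 h2 ih => exact ReflTransGen.head h2 ih
  · intro h; induction h with
    | refl => exact ReflTransGen.refl
    | tail h1 h2 ih => exact ReflTransGen.head h2 ih

open Relation in
private lemma comparable_of_univalent {x : A → A → Prop} (hx : RUnivalent x) :
    ∀ {c b d : A}, ReflTransGen x c b → ReflTransGen x c d →
      ReflTransGen x b d ∨ ReflTransGen x d b := by
  intro c b d h1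
  induction h1 using Relation.ReflTransGen.head_induction_on generalizing d with
  | refl => exact fun h2 => Or.inl h2
  | head hcc' h ih =>
    intro h2
    rcases h2.cases_head with rfl | ⟨e, hce, hed⟩
    · exact Or.inr (ReflTransGen.head hcc' h)
    · have he : _ = e := hx _ _ ⟨_, hcc', hce⟩
      subst he
      exact ih hed

theorem fc_equivalence {A : Type*} (x : A → A → Prop) (hx : RUnivalent x) :
    rid ≤ fc x ∧ rcomp (fc x) (fc x) ≤ fc x ∧ rconv (fc x) = fc x := by
  refine ⟨?_, ?_, ?_⟩
  · intro a b hab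
    cases hab
    exact ⟨a, Relation.ReflTransGen.refl, Relation.ReflTransGen.refl⟩
  · rintro a e ⟨c, ⟨b, hab, hbc⟩, ⟨d, hcd, hde⟩⟩
    rw [rstar_conv_iff] at hbc hde
    rcases comparable_of_univalent hx hbc hcd with h | h
    · exact ⟨d, Relation.ReflTransGen.trans hab h, (rstar_conv_iff x).2 hde⟩
    · exact ⟨b, hab, (rstar_conv_iff x).2 (Relation.ReflTransGen.trans hde h)⟩
  · ext a b
    constructor
    · rintro ⟨c, hbc, hcb⟩
      rw [rstar_conv_iff] at hcb
      exact ⟨c, hcb, (rstar_conv_iff x).2 hbc⟩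
    · rintro ⟨c, hbc, hcb⟩
      rw [rstar_conv_iff] at hcb
      exact ⟨c, hcb, (rstar_conv_iff x).2 hbc⟩
end

section
/- Let x be a univalent binary relation on a type A. Then fc(x) = wcc(x), i.e., x^*∘(xᵀ)^* = (x ⊔ xᵀ)^*: for univalent relations the forest-components relation coincides with the weakly-connected-components closure. -/
variable {A : Type*}

lemma rconv_star {A : Type*} (x : A → A → Prop) {a b : A} :
    rstar (rconv x) a b ↔ rstar x b a := by
  constructor <;> intro h <;>
  · induction h with
    | refl => exact Relation.ReflTransGen.refl
    | tail _ h ih => exact Relation.ReflTransGen.head h ih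

lemma star_step {A : Type*} (x : A → A → Prop)
    (hfun : ∀ u v w : A, x u v → x u w → v = w) :
    ∀ (b m c : A), rstar x b m → x b c → rstar x c m ∨ m = b := by
  intro b m c h hbc
  rcases h.cases_head with rfl | ⟨b', hbb', hb'm⟩
  · exact Or.inr rfl
  · exact Or.inl (hfun _ _ _ hbc hbb' ▸ hb'm)

theorem fc_wcc {A : Type*} (x : A → A → Prop) (hx : RUnivalent x) :
    fc x = wcc x := by
  have hfun : ∀ {u v w : A}, x u v → x u w → v = w := fun {u v w} huv huw =>
    hx _ _ ⟨u, huv, huw⟩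
  funext a b
  apply propext
  constructor
  · rintro ⟨m, ham, hmb⟩
    exact Relation.ReflTransGen.trans
      (Relation.ReflTransGen.mono (fun u v h => Or.inl h) _ _ ham)
      (Relation.ReflTransGen.mono (fun u v h => Or.inr h) _ _ hmb)
  · intro h
    induction h with
    | refl => exact ⟨a, Relation.ReflTransGen.refl, Relation.ReflTransGen.refl⟩
    | @tail b c _ step ih =>
      obtain ⟨m, ham, hmb⟩ := ih
      have hbm : rstar x b m := (rconv_star x).mp hmb
      rcases step with hbc | hcb
      · rcases star_step x (fun _ _ _ h h' => hfun h h') _ _ _ hbm hbc with hcm | rfl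
        · exact ⟨m, ham, (rconv_star x).mpr hcm⟩
        · exact ⟨c, ham.tail hbc, Relation.ReflTransGen.refl⟩
      · exact ⟨m, ham, (rconv_star x).mpr (Relation.ReflTransGen.head hcb hbm)⟩
end

section
/- Let p be a univalent binary relation on a type A. Then following parents from a root gives the root again: roots(p) = pᵀ∘roots(p) = (pᵀ)^*∘roots(p), and for every relation x, root(p,x) = pᵀ∘root(p,x) = (pᵀ)^*∘root(p,x). -/
variable {A : Type*}

theorem root_successor_loop {A : Type*} (p : A → A → Prop) (hp : RUnivalent p) :
    rroots p = rcomp (rconv p) (rroots p) ∧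
    rroots p = rcomp (rstar (rconv p)) (rroots p) ∧
    ∀ x : A → A → Prop,
      rroot p x = rcomp (rconv p) (rroot p x) ∧
      rroot p x = rcomp (rstar (rconv p)) (rroot p x) := by

  have uni : ∀ a b c : A, p b a → p b c → a = c := fun a b c h1 h2 => hp a c ⟨b, h1, h2⟩
  have key : ∀ a c : A, Relation.ReflTransGen (rconv p) a c → p c c → p a a := by
    intro a c h
    induction h using Relation.ReflTransGen.head_induction_on with
    | refl => exact fun h => h
    | head hab _ ih =>
      intro hc
      have hb := ih hc
      have : _ = _ := uni _ _ _ hab hb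
      subst this
      exact hab
  have hroots : ∀ a b : A, rroots p a b ↔ p a a := by
    intro a b
    constructor
    · rintro ⟨c, ⟨hpac, hac⟩, -⟩; subst hac; exact hpac
    · intro h; exact ⟨a, ⟨h, rfl⟩, trivial⟩
  have h1 : rroots p = rcomp (rconv p) (rroots p) := by
    funext a b
    ext
    constructor
    · intro h
      have := (hroots a b).1 h
      exact ⟨a, this, h⟩
    · rintro ⟨c, hca, hroot⟩
      have hcc := (hroots c b).1 hroot
      have : a = c := uni a c c hca hcc
      subst this
      exact (hroots a b).2 hca
  have h2 : rroots p = rcomp (rstar (rconv p)) (rroots p) := by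
    funext a b
    ext
    constructor
    · intro h
      exact ⟨a, Relation.ReflTransGen.refl, h⟩
    · rintro ⟨c, hac, hroot⟩
      exact (hroots a b).2 (key a c hac ((hroots c b).1 hroot))
  refine ⟨h1, h2, fun x => ?_⟩
  have hx1 : rroot p x = rcomp (rconv p) (rroot p x) := by
    funext a b
    ext
    constructor
    · rintro ⟨⟨c, hac, hxc⟩, hr⟩
      have haa := (hroots a b).1 hr
      exact ⟨a, haa, ⟨⟨c, hac, hxc⟩, hr⟩⟩
    · rintro ⟨c, hca, ⟨⟨d, hcd, hxd⟩, hr⟩⟩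
      have hcc := (hroots c b).1 hr
      have : a = c := uni a c c hca hcc
      subst this
      exact ⟨⟨d, hcd, hxd⟩, (hroots a b).2 hcc⟩
  have hx2 : rroot p x = rcomp (rstar (rconv p)) (rroot p x) := by
    funext a b
    ext
    constructor
    · intro h
      exact ⟨a, Relation.ReflTransGen.refl, h⟩
    · rintro ⟨c, hac, ⟨⟨d, hcd, hxd⟩, hr⟩⟩
      have hcc := (hroots c b).1 hr
      have haa := key a c hac hcc
      exact ⟨⟨d, hac.trans hcd, hxd⟩, (hroots a b).2 haa⟩
  exact ⟨hx1, hx2⟩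
end

section
/- Let p, w, y be binary relations on a type A. If p ⊓ 1ᶜ is acyclic, w and y are points, and y ⊆ (pᵀ)^*∘w (i.e., y is an ancestor of w in p), then the updated parent relation remains acyclic apart from self-loops: ((w ⊓ yᵀ) ⊔ (wᶜ ⊓ p)) ⊓ 1ᶜ is acyclic. -/
variable {A : Type*}

private lemma point_spec {A : Type*} {w : A → A → Prop} (hw : RPoint w) (a : A) :
    ∃ w0 : A, ∀ x z, w x z ↔ x = w0 := by
  obtain ⟨hvec, hinj, hsurj⟩ := hw
  obtain ⟨w0, hw0, -⟩ := hsurj a a rfl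
  have hall : ∀ z, w w0 z := by
    intro z
    have : rcomp w ⊤ w0 z := ⟨a, hw0, trivial⟩
    rw [hvec] at this; exact this
  refine ⟨w0, fun x z => ⟨fun hx => ?_, fun hx => hx ▸ hall z⟩⟩
  exact hinj x w0 ⟨z, hx, hall z⟩

private lemma strip_diag {A : Type*} {p : A → A → Prop} {a b : A}
    (h : Relation.ReflTransGen p a b) :
    Relation.ReflTransGen (fun u v => p u v ∧ u ≠ v) a b := by
  induction h with
  | refl => exact .refl
  | @tail c d _ hcd ih =>
    rcases eq_or_ne c d with rfl | hne
    · exact ih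
    · exact ih.tail ⟨hcd, hne⟩

theorem update_acyclic {A : Type*} (p w y : A → A → Prop)
    (hp : RAcyclic (p ⊓ ridᶜ)) (hw : RPoint w) (hy : RPoint y)
    (hyw : y ≤ rcomp (rstar (rconv p)) w) :
    RAcyclic (rwrite p w y ⊓ ridᶜ) := by
  intro a b hab hid
  have hid' : a = b := hid
  subst hid'
  obtain ⟨w0, hw0⟩ := point_spec hw a
  obtain ⟨y0, hy0⟩ := point_spec hy a
  set P : A → A → Prop := fun u v => p u v ∧ u ≠ v with hP
  have hPacyc : ∀ c, ¬ Relation.TransGen P c c := by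
    intro c hc
    refine hp c c ?_ rfl
    exact Relation.TransGen.mono (fun u v huv => ⟨huv.1, huv.2⟩) _ _ hc
  have hedge : ∀ u v, (rwrite p w y ⊓ ridᶜ) u v →
      P u v ∨ (u = w0 ∧ v = y0 ∧ u ≠ v) := by
    intro u v huv
    have hne : u ≠ v := huv.2
    rcases huv.1 with ⟨hwu, hyv⟩ | ⟨-, hpu⟩
    · exact Or.inr ⟨(hw0 u v).mp hwu, (hy0 v u).mp hyv, hne⟩
    · exact Or.inl ⟨hpu, hne⟩
  have hwy : Relation.ReflTransGen P w0 y0 := by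
    obtain ⟨b, hb1, hb2⟩ := hyw y0 a ((hy0 y0 a).mpr rfl)
    have hbw : b = w0 := (hw0 b a).mp hb2
    subst hbw
    exact strip_diag (Relation.ReflTransGen.swap (r := rconv p) b y0 hb1)
  have hdecomp : ∀ u v, Relation.TransGen (rwrite p w y ⊓ ridᶜ) u v →
      Relation.TransGen P u v ∨
        (Relation.ReflTransGen P u w0 ∧ Relation.ReflTransGen P y0 v ∧ w0 ≠ y0) := by
    intro u v h
    induction h with
    | single h =>
      rcases hedge _ _ h with hPuv | ⟨rfl, rfl, hne⟩
      · exact Or.inl (.single hPuv)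
      · exact Or.inr ⟨.refl, .refl, hne⟩
    | tail _ hcv ih =>
      rcases hedge _ _ hcv with hPcv | ⟨rfl, rfl, hne⟩
      · rcases ih with h1 | ⟨h1, h2, h3⟩
        · exact Or.inl (h1.tail hPcv)
        · exact Or.inr ⟨h1, h2.tail hPcv, h3⟩
      · rcases ih with h1 | ⟨h1, h2, h3⟩
        · exact Or.inr ⟨h1.to_reflTransGen, .refl, hne⟩
        · exact Or.inr ⟨h1, .refl, hne⟩
  rcases hdecomp a a hab with h1 | ⟨h1, h2, h3⟩
  · exact hPacyc a h1
  · have htw : Relation.TransGen P w0 y0 :=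
      (Relation.reflTransGen_iff_eq_or_transGen.mp hwy).resolve_left (fun e => h3 e.symm)
    exact hPacyc w0 (Relation.TransGen.trans_left htw (h2.trans h1))
end

section
/- Let x and p be binary relations on a type A with x a point. Then x ⊓ p^* = (x ⊓ 1) ⊔ ((x ⊓ p)∘(xᶜ ⊓ p)^*): reachability from the node x uses an edge starting in x at most in the first step and can omit such edges in all remaining steps. -/
variable {A : Type*}

theorem omit_redundant_points {A : Type*} (x p : A → A → Prop) (hx : RPoint x) :
    x ⊓ rstar p = (x ⊓ rid) ⊔ rcomp (x ⊓ p) (rstar (xᶜ ⊓ p)) := by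
  obtain ⟨hv, hinj, hsur⟩ := hx
  have hvec : ∀ a b c, x a b → x a c := by
    intro a b c h
    have h2 : rcomp x ⊤ a c := ⟨b, h, trivial⟩
    rwa [hv] at h2
  funext a b
  apply propext
  simp only [Pi.inf_apply, Pi.sup_apply, Pi.compl_apply, inf_Prop_eq, sup_Prop_eq,
    compl_iff_not]
  constructor
  · rintro ⟨hxa, hpath⟩
    have hxa' : ∀ d, x a d := fun d => hvec a b d hxa
    have hxchar : ∀ c d, x c d ↔ c = a := by
      intro c d
      constructor
      · intro h
        exact hinj c a ⟨d, h, hxa' d⟩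
      · rintro rfl; exact hxa' d
    clear hxa
    induction hpath with
    | refl => exact Or.inl ⟨hxa' a, rfl⟩
    | @tail c d hac hcd ih =>
      by_cases hca : c = a
      · subst hca
        exact Or.inr ⟨d, ⟨hxa' d, hcd⟩, Relation.ReflTransGen.refl⟩
      · rcases ih with ⟨_, rfl⟩ | ⟨e, he, hpath'⟩
        · exact absurd rfl hca
        · refine Or.inr ⟨e, he, hpath'.tail ?_⟩
          simp only [Pi.inf_apply, Pi.compl_apply, inf_Prop_eq, compl_iff_not]
          exact ⟨fun h => hca ((hxchar c d).mp h), hcd⟩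
  · rintro (⟨hxa, rfl⟩ | ⟨c, ⟨hxc, hpac⟩, hpath⟩)
    · exact ⟨hxa, Relation.ReflTransGen.refl⟩
    · refine ⟨hvec a c b hxc, Relation.ReflTransGen.head hpac ?_⟩
      exact Relation.ReflTransGen.mono (r := xᶜ ⊓ p) (fun u v h => h.2) _ _ hpath
end

section
/- Let x be a binary relation on a type A such that x ⊓ 1ᶜ is acyclic. Then the self-loops of the transitive closure, of the square, and of x itself coincide: x^+ ⊓ 1 = (x∘x) ⊓ 1 = x ⊓ 1. -/
variable {A : Type*}

lemma transgen_collapse (x : A → A → Prop) {a b : A} (h : Relation.TransGen x a b) :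
    Relation.TransGen (x ⊓ ridᶜ) a b ∨ (a = b ∧ x a a) := by
  induction h with
  | @single c hstep =>
    by_cases hac : a = c
    · exact Or.inr ⟨hac, hac ▸ hstep⟩
    · exact Or.inl (Relation.TransGen.single ⟨hstep, hac⟩)
  | @tail b c h hstep ih =>
    rcases ih with ih | ⟨rfl, hxa⟩
    · by_cases hbc : b = c
      · exact Or.inl (hbc ▸ ih)
      · exact Or.inl (ih.tail ⟨hstep, hbc⟩)
    · by_cases hac : a = c
      · exact Or.inr ⟨hac, hxa⟩
      · exact Or.inl (Relation.TransGen.single ⟨hstep, hac⟩)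

theorem acyclic_square {A : Type*} (x : A → A → Prop)
    (hx : RAcyclic (x ⊓ ridᶜ)) :
    rplus x ⊓ rid = rcomp x x ⊓ rid ∧ rcomp x x ⊓ rid = x ⊓ rid := by
  have key : ∀ a : A, Relation.TransGen x a a → x a a := by
    intro a h
    rcases transgen_collapse x h with h' | ⟨_, hxa⟩
    · exact absurd rfl (hx a a h')
    · exact hxa
  constructor
  · funext a b
    simp only [Pi.inf_apply, rplus, rcomp, rid, eq_iff_iff, inf_Prop_eq]
    constructor
    · rintro ⟨h, rfl⟩
      exact ⟨⟨a, key a h, key a h⟩, rfl⟩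
    · rintro ⟨⟨c, h1, h2⟩, rfl⟩
      exact ⟨(Relation.TransGen.single h1).tail h2, rfl⟩
  · funext a b
    simp only [Pi.inf_apply, rcomp, rid, eq_iff_iff, inf_Prop_eq]
    constructor
    · rintro ⟨⟨c, h1, h2⟩, rfl⟩
      exact ⟨key a ((Relation.TransGen.single h1).tail h2), rfl⟩
    · rintro ⟨h, rfl⟩
      exact ⟨⟨a, h, h⟩, rfl⟩
end

section
/- Let x and y be binary relations on a type A with x an arc (a single-edge relation). Then (x ⊔ y)^+ = y^+ ⊔ (y^*∘x∘y^*): in the transitive closure of the union it suffices to use the edge x at most once. -/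
variable {A : Type*}

lemma arc_single {A : Type*} (x : A → A → Prop) (hx : RArc x) (a0 : A) :
    ∃ a b, x a b ∧ ∀ u v, x u v → u = a ∧ v = b := by
  obtain ⟨⟨_, hinj1, hsur1⟩, ⟨_, hinj2, _⟩⟩ := hx
  obtain ⟨c, ⟨e, hce, _⟩, _⟩ := hsur1 a0 a0 rfl
  refine ⟨c, e, hce, fun u v huv => ?_⟩
  constructor
  · exact hinj1 u c ⟨a0, ⟨v, huv, trivial⟩, ⟨e, hce, trivial⟩⟩
  · exact hinj2 v e ⟨a0, ⟨u, huv, trivial⟩, ⟨c, hce, trivial⟩⟩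

theorem plus_arc_decompose {A : Type*} (x y : A → A → Prop) (hx : RArc x) :
    rplus (x ⊔ y) = rplus y ⊔ rcomp (rcomp (rstar y) x) (rstar y) := by
  funext u v
  ext
  obtain ⟨a, b, hab, huniq⟩ := arc_single x hx u
  constructor
  · intro h
    have key : ∀ p q, rplus (x ⊔ y) p q →
        Relation.TransGen y p q ∨
          (Relation.ReflTransGen y p a ∧ Relation.ReflTransGen y b q) := by
      intro p q h
      induction h with
      | single hs =>
        rcases hs with hs | hs
        · obtain ⟨rfl, rfl⟩ := huniq _ _ hs
          exact Or.inr ⟨.refl, .refl⟩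
        · exact Or.inl (.single hs)
      | tail _ hs ih =>
        rcases hs with hs | hs
        · obtain ⟨rfl, rfl⟩ := huniq _ _ hs
          rcases ih with h1 | ⟨h1, h2⟩
          · exact Or.inr ⟨h1.to_reflTransGen, .refl⟩
          · exact Or.inr ⟨h1, .refl⟩
        · rcases ih with h1 | ⟨h1, h2⟩
          · exact Or.inl (h1.tail hs)
          · exact Or.inr ⟨h1, h2.tail hs⟩
    rcases key u v h with h1 | ⟨h1, h2⟩
    · exact Or.inl h1
    · exact Or.inr ⟨b, ⟨a, h1, hab⟩, h2⟩
  · rintro (h | ⟨b', ⟨a', h1, hx'⟩, h2⟩)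
    · exact Relation.TransGen.mono (fun p q h => Or.inr h) _ _ h
    · have h1' : Relation.ReflTransGen (x ⊔ y) u a' :=
        Relation.ReflTransGen.mono (fun p q h => Or.inr h) _ _ h1
      have h2' : Relation.ReflTransGen (x ⊔ y) b' v :=
        Relation.ReflTransGen.mono (fun p q h => Or.inr h) _ _ h2
      exact Relation.TransGen.trans_right h1'
        (Relation.TransGen.head' (Or.inl hx') h2')
end
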